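/- Let m = 3, D = diag(d₁,d₂,d₃) and D̂ = diag(d̂₁,d̂₂,d̂₃) real diagonal with d₁ > d₂ > d₃, and let ρ : ℝ² → M₃(ℝ) be a continuously differentiable real symmetric matrix function (ρᵀ = ρ) satisfying the N-wave equation [D, ρₜ] − [D̂, ρₓ] = [[D,ρ],[D̂,ρ]]. Define ψ₁ = (d̂₂ − d̂₁)/(d₁ − d₂), ψ₂ = (d̂₃ − d̂₂)/(d₂ − d₃), ψ₃ = (d̂₃ − d̂₁)/(d₁ − d₃); the real-valued functions φ₁ = −√(d₁−d₂) ρ₁₂, φ₂ = −√(d₂−d₃) ρ₂₃, φ₃ = −√(d₁−d₃) ρ₁₃; and ε = (d₁d̂₂ − d₂d̂₁ + d₂d̂₃ − d₃d̂₂ + d₃d̂₁ − d₁d̂₃) · ((d₁−d₂)(d₁−d₃)(d₂−d₃))^{−1/2}. Then the exact-resonance three-wave equations hold: (φ₁)ₜ + ψ₁(φ₁)ₓ = ε φ₂ φ₃, (φ₂)ₜ + ψ₂(φ₂)ₓ = ε φ₁ φ₃, (φ₃)ₜ + ψ₃(φ₃)ₓ = −ε φ₁ φ₂. -/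

import Mathlib

open Matrix

/-- The real symmetric (`m = 3`) case of the N-wave equation yields the exact-resonance
three-wave equations for `φ₁ = −√(d₁−d₂)ρ₁₂`, `φ₂ = −√(d₂−d₃)ρ₂₃`, `φ₃ = −√(d₁−d₃)ρ₁₃`. -/
theorem stmt_12
    (d dh : Fin 3 → ℝ) (h12 : d 0 > d 1) (h23 : d 1 > d 2)
    (D Dh : Matrix (Fin 3) (Fin 3) ℝ)
    (hD : D = Matrix.diagonal d)
    (hDh : Dh = Matrix.diagonal dh)
    (ρ ρx ρt : ℝ → ℝ → Matrix (Fin 3) (Fin 3) ℝ)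
    (hρsym : ∀ x t, (ρ x t)ᵀ = ρ x t)
    (hρx : ∀ x t i j, HasDerivAt (fun y => ρ y t i j) (ρx x t i j) x)
    (hρt : ∀ x t i j, HasDerivAt (fun s => ρ x s i j) (ρt x t i j) t)
    (hρxcont : ∀ i j, Continuous fun p : ℝ × ℝ => ρx p.1 p.2 i j)
    (hρtcont : ∀ i j, Continuous fun p : ℝ × ℝ => ρt p.1 p.2 i j)
    (hNwave : ∀ x t,
      (D * ρt x t - ρt x t * D) - (Dh * ρx x t - ρx x t * Dh)
        = (D * ρ x t - ρ x t * D) * (Dh * ρ x t - ρ x t * Dh)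
          - (Dh * ρ x t - ρ x t * Dh) * (D * ρ x t - ρ x t * D))
    (ψ₁ ψ₂ ψ₃ ε : ℝ)
    (hψ₁ : ψ₁ = (dh 1 - dh 0) / (d 0 - d 1))
    (hψ₂ : ψ₂ = (dh 2 - dh 1) / (d 1 - d 2))
    (hψ₃ : ψ₃ = (dh 2 - dh 0) / (d 0 - d 2))
    (hε : ε = (d 0 * dh 1 - d 1 * dh 0 + d 1 * dh 2 - d 2 * dh 1
        + d 2 * dh 0 - d 0 * dh 2)
      / Real.sqrt ((d 0 - d 1) * (d 0 - d 2) * (d 1 - d 2)))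
    (φ₁ φ₂ φ₃ : ℝ → ℝ → ℝ)
    (hφ₁ : ∀ x t, φ₁ x t = -Real.sqrt (d 0 - d 1) * ρ x t 0 1)
    (hφ₂ : ∀ x t, φ₂ x t = -Real.sqrt (d 1 - d 2) * ρ x t 1 2)
    (hφ₃ : ∀ x t, φ₃ x t = -Real.sqrt (d 0 - d 2) * ρ x t 0 2) :
    ∀ x t,
      (-Real.sqrt (d 0 - d 1) * ρt x t 0 1)
          + ψ₁ * (-Real.sqrt (d 0 - d 1) * ρx x t 0 1)
        = ε * φ₂ x t * φ₃ x t
      ∧ (-Real.sqrt (d 1 - d 2) * ρt x t 1 2)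
          + ψ₂ * (-Real.sqrt (d 1 - d 2) * ρx x t 1 2)
        = ε * φ₁ x t * φ₃ x t
      ∧ (-Real.sqrt (d 0 - d 2) * ρt x t 0 2)
          + ψ₃ * (-Real.sqrt (d 0 - d 2) * ρx x t 0 2)
        = -ε * φ₁ x t * φ₂ x t := by
  have ha : (0:ℝ) < d 0 - d 1 := by linarith
  have hb : (0:ℝ) < d 1 - d 2 := by linarith
  have hc : (0:ℝ) < d 0 - d 2 := by linarith
  have hs1 : Real.sqrt (d 0 - d 1) ^ 2 = d 0 - d 1 := Real.sq_sqrt ha.le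
  have hs2 : Real.sqrt (d 1 - d 2) ^ 2 = d 1 - d 2 := Real.sq_sqrt hb.le
  have hs3 : Real.sqrt (d 0 - d 2) ^ 2 = d 0 - d 2 := Real.sq_sqrt hc.le
  have hs1ne : Real.sqrt (d 0 - d 1) ≠ 0 := by positivity
  have hs2ne : Real.sqrt (d 1 - d 2) ≠ 0 := by positivity
  have hs3ne : Real.sqrt (d 0 - d 2) ≠ 0 := by positivity
  have hS : Real.sqrt ((d 0 - d 1) * (d 0 - d 2) * (d 1 - d 2))
      = Real.sqrt (d 0 - d 1) * Real.sqrt (d 0 - d 2) * Real.sqrt (d 1 - d 2) := by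
    rw [Real.sqrt_mul (by positivity), Real.sqrt_mul ha.le]
  subst hD hDh
  intro x t
  have h21 : ρ x t 1 2 = ρ x t 2 1 := congrFun (congrFun (hρsym x t) 2) 1
  have h10 : ρ x t 0 1 = ρ x t 1 0 := congrFun (congrFun (hρsym x t) 1) 0
  refine ⟨?_, ?_, ?_⟩
  · have E01 := congrFun (congrFun (hNwave x t) 0) 1
    simp [Matrix.sub_apply, Matrix.mul_apply, Matrix.diagonal_apply, Fin.sum_univ_three] at E01
    rw [← h21] at E01
    rw [hφ₂, hφ₃, hψ₁, hε, hS]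
    field_simp
    linear_combination (-1 *
        ((d 0 - d 1) * ρt x t 0 1 + (dh 1 - dh 0) * ρx x t 0 1)) * hs1
      + (-(d 0 - d 1)) * E01
  · have E12 := congrFun (congrFun (hNwave x t) 1) 2
    simp [Matrix.sub_apply, Matrix.mul_apply, Matrix.diagonal_apply, Fin.sum_univ_three] at E12
    rw [← h10] at E12
    rw [hφ₁, hφ₃, hψ₂, hε, hS]
    field_simp
    linear_combination (-1 *
        ((d 1 - d 2) * ρt x t 1 2 + (dh 2 - dh 1) * ρx x t 1 2)) * hs2
      + (-(d 1 - d 2)) * E12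
  · have E02 := congrFun (congrFun (hNwave x t) 0) 2
    simp [Matrix.sub_apply, Matrix.mul_apply, Matrix.diagonal_apply, Fin.sum_univ_three] at E02
    rw [hφ₁, hφ₂, hψ₃, hε, hS]
    field_simp
    linear_combination (-1 *
        ((d 0 - d 2) * ρt x t 0 2 + (dh 2 - dh 0) * ρx x t 0 2)) * hs3
      + (-(d 0 - d 2)) * E02
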